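/- arXiv:1803.03761 — 4 statements merged into one kernel-verified Lean document; each statement's English description precedes it below -/
import Mathlib

section
/- Let T ≥ 0 and let X, Z be finite nonempty types and Y a finite additive abelian group. Fix a quantum query algorithm with T queries: a unit vector ψ₀ in H = EuclideanSpace ℂ (X × Y × Z) and unitaries C₀, …, C_T on H; for a function Q : X → Y the final state is ψ^Q := C_T · O_Q · C_{T−1} · ⋯ · O_Q · C₀ · ψ₀, where O_Q is the oracle unitary. Let ε ∈ [0,1], let B ⊆ X be an ε-random subset, and for each subset B let P_B : X → Y be any function with P_B x = 0 for all x ∉ B. Then the expectation over B of the trace distance between the pure states ψ^F and ψ^{F + P_B}, namely E_B [ √(1 − |⟨ψ^F, ψ^{F + P_B}⟩|²) ], is at most 2·T·√ε, for every fixed F : X → Y. -/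
open scoped InnerProductSpace

noncomputable section

/-- The oracle unitary for a function `Q : X → Y`: the permutation unitary induced on
standard basis vectors by `(x, y, z) ↦ (x, y + Q x, z)`. -/
def oracleOp {X Y Z : Type*} [Fintype X] [Fintype Y] [Fintype Z] [AddCommGroup Y]
    (Q : X → Y) :
    EuclideanSpace ℂ (X × Y × Z) →L[ℂ] EuclideanSpace ℂ (X × Y × Z) :=
  LinearMap.toContinuousLinearMap
    { toFun := fun ψ => (WithLp.toLp 2 (fun p : X × Y × Z => ψ (p.1, p.2.1 - Q p.1, p.2.2)) : EuclideanSpace ℂ (X × Y × Z))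
      map_add' := fun _ _ => rfl
      map_smul' := fun _ _ => rfl }

/-- `runQ T C O ψ₀ = C T • O • C (T-1) • ⋯ • O • C 0 • ψ₀`: the final state of a quantum
query algorithm with `T` queries, computation unitaries `C 0, …, C T` and oracle unitary `O`. -/
def runQ {H : Type*} [NormedAddCommGroup H] [NormedSpace ℂ H] :
    (T : ℕ) → (Fin (T + 1) → (H →L[ℂ] H)) → (H →L[ℂ] H) → H → H
  | 0, C, _, ψ => C 0 ψ
  | T + 1, C, O, ψ => C (Fin.last (T + 1)) (O (runQ T (fun i => C i.castSucc) O ψ))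

/-! ### Auxiliary lemmas -/

section TraceDist

private lemma td_le_norm_sub {E : Type*} [NormedAddCommGroup E] [InnerProductSpace ℂ E]
    (ψ φ : E) (hψ : ‖ψ‖ = 1) (hφ : ‖φ‖ = 1) :
    Real.sqrt (1 - ‖⟪ψ, φ⟫_ℂ‖ ^ 2) ≤ ‖ψ - φ‖ := by
  have hc : ‖⟪ψ, φ⟫_ℂ‖ ≤ 1 := by
    simpa [hψ, hφ] using norm_inner_le_norm (𝕜 := ℂ) ψ φ
  have hre : RCLike.re ⟪ψ, φ⟫_ℂ ≤ ‖⟪ψ, φ⟫_ℂ‖ := RCLike.re_le_norm _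
  have hns : ‖ψ - φ‖ ^ 2 = 2 - 2 * RCLike.re ⟪ψ, φ⟫_ℂ := by
    rw [norm_sub_sq (𝕜 := ℂ), hψ, hφ]; ring
  have h1 : 1 - ‖⟪ψ, φ⟫_ℂ‖ ^ 2 ≤ ‖ψ - φ‖ ^ 2 := by nlinarith
  calc Real.sqrt (1 - ‖⟪ψ, φ⟫_ℂ‖ ^ 2) ≤ Real.sqrt (‖ψ - φ‖ ^ 2) := Real.sqrt_le_sqrt h1
    _ = ‖ψ - φ‖ := Real.sqrt_sq (norm_nonneg _)

end TraceDist

section RunQ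

variable {H : Type*} [NormedAddCommGroup H] [NormedSpace ℂ H]

private lemma runQ_norm :
    ∀ (T : ℕ) (C : Fin (T + 1) → (H →L[ℂ] H)) (O : H →L[ℂ] H) (ψ : H),
    (∀ i x, ‖C i x‖ = ‖x‖) → (∀ x, ‖O x‖ = ‖x‖) → ‖runQ T C O ψ‖ = ‖ψ‖
  | 0, C, O, ψ, hC, hO => hC 0 ψ
  | T + 1, C, O, ψ, hC, hO => by
    show ‖C (Fin.last (T + 1)) (O (runQ T (fun i => C i.castSucc) O ψ))‖ = ‖ψ‖
    rw [hC, hO, runQ_norm T (fun i => C i.castSucc) O ψ (fun i x => hC _ x) hO]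

/-- The hybrid argument: the deviation between two runs is bounded by the sum of the
deviations of the oracles on the intermediate states of the first run. -/
private lemma runQ_hybrid :
    ∀ (T : ℕ) (C : Fin (T + 1) → (H →L[ℂ] H)) (O O' : H →L[ℂ] H) (ψ : H),
    (∀ i x, ‖C i x‖ = ‖x‖) → (∀ x, ‖O' x‖ = ‖x‖) →
    ‖runQ T C O ψ - runQ T C O' ψ‖ ≤
      ∑ t : Fin T, ‖(O - O') (runQ t.val
        (fun i => C (Fin.castLE (by omega) i)) O ψ)‖
  | 0, C, O, O', ψ, hC, hO' => by simp [runQ]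
  | T + 1, C, O, O', ψ, hC, hO' => by
    have IH := runQ_hybrid T (fun i => C i.castSucc) O O' ψ (fun i x => hC _ x) hO'
    set C' : Fin (T + 1) → (H →L[ℂ] H) := fun i => C i.castSucc with hC'def
    have h1 : runQ (T + 1) C O ψ = C (Fin.last (T + 1)) (O (runQ T C' O ψ)) := rfl
    have h2 : runQ (T + 1) C O' ψ = C (Fin.last (T + 1)) (O' (runQ T C' O' ψ)) := rfl
    rw [h1, h2, ← map_sub, hC]
    have key : ‖O (runQ T C' O ψ) - O' (runQ T C' O' ψ)‖ ≤
        ‖(O - O') (runQ T C' O ψ)‖ + ‖runQ T C' O ψ - runQ T C' O' ψ‖ := by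
      have heq : O (runQ T C' O ψ) - O' (runQ T C' O' ψ) =
          (O - O') (runQ T C' O ψ) + O' (runQ T C' O ψ - runQ T C' O' ψ) := by
        simp only [ContinuousLinearMap.sub_apply, map_sub]; abel
      rw [heq]
      exact (norm_add_le _ _).trans (by rw [hO'])
    refine key.trans ?_
    rw [Fin.sum_univ_castSucc]
    have hlast : ‖(O - O') (runQ T C' O ψ)‖ =
        ‖(O - O') (runQ (Fin.last T : Fin (T+1)).val
          (fun i => C (Fin.castLE (by omega) i)) O ψ)‖ := rfl
    have hIH' : ‖runQ T C' O ψ - runQ T C' O' ψ‖ ≤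
        ∑ t : Fin T, ‖(O - O') (runQ (t.castSucc : Fin (T+1)).val
          (fun i => C (Fin.castLE (by omega) i)) O ψ)‖ := IH
    linarith [hIH']

end RunQ

section Oracle

variable {X Y Z : Type*} [Fintype X] [DecidableEq X] [Fintype Y] [Fintype Z] [AddCommGroup Y]

omit [DecidableEq X] in
private lemma oracleOp_apply (Q : X → Y) (ψ : EuclideanSpace ℂ (X × Y × Z)) (p : X × Y × Z) :
    oracleOp Q ψ p = ψ (p.1, p.2.1 - Q p.1, p.2.2) := rfl

omit [DecidableEq X] [AddCommGroup Y] in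
private lemma euclid_norm_sq (ψ : EuclideanSpace ℂ (X × Y × Z)) :
    ‖ψ‖ ^ 2 = ∑ p : X × Y × Z, ‖ψ p‖ ^ 2 := by
  rw [EuclideanSpace.norm_eq, Real.sq_sqrt (by positivity)]

omit [DecidableEq X] in
private lemma oracleOp_norm (Q : X → Y) (ψ : EuclideanSpace ℂ (X × Y × Z)) :
    ‖oracleOp Q ψ‖ = ‖ψ‖ := by
  rw [EuclideanSpace.norm_eq, EuclideanSpace.norm_eq]
  congr 1
  exact Equiv.sum_comp (Equiv.prodShear (Equiv.refl X)
      (fun x => Equiv.prodCongr (Equiv.subRight (Q x)) (Equiv.refl Z)))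
      (fun p => ‖ψ p‖ ^ 2)

omit [DecidableEq X] in
private lemma oracleOp_sub_apply (F G : X → Y) (ψ : EuclideanSpace ℂ (X × Y × Z))
    (p : X × Y × Z) :
    (oracleOp F - oracleOp G :
        EuclideanSpace ℂ (X × Y × Z) →L[ℂ] EuclideanSpace ℂ (X × Y × Z)) ψ p =
      ψ (p.1, p.2.1 - F p.1, p.2.2) - ψ (p.1, p.2.1 - G p.1, p.2.2) := by
  rw [ContinuousLinearMap.sub_apply, PiLp.sub_apply, oracleOp_apply, oracleOp_apply]

/-- The squared norm of the oracle-difference applied to a state is controlled by the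
probability mass of the state on the blinded positions. -/
private lemma diff_sq_le (F G : X → Y) (χ : X → Bool) (hFG : ∀ x, χ x = false → G x = F x)
    (ψ : EuclideanSpace ℂ (X × Y × Z)) :
    ‖(oracleOp F - oracleOp G :
        EuclideanSpace ℂ (X × Y × Z) →L[ℂ] EuclideanSpace ℂ (X × Y × Z)) ψ‖ ^ 2 ≤
      ∑ x : X, (if χ x then 4 * (∑ y : Y, ∑ z : Z, ‖ψ (x, y, z)‖ ^ 2) else 0) := by
  rw [euclid_norm_sq]
  simp_rw [oracleOp_sub_apply]
  rw [Fintype.sum_prod_type]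
  apply Finset.sum_le_sum
  intro x _
  by_cases hx : χ x
  · simp only [hx, if_true]
    have shift : ∀ c : Y, (∑ q : Y × Z, ‖ψ (x, q.1 - c, q.2)‖ ^ 2)
        = ∑ y : Y, ∑ z : Z, ‖ψ (x, y, z)‖ ^ 2 := by
      intro c
      rw [Fintype.sum_prod_type]
      exact Equiv.sum_comp (Equiv.subRight c) (fun y => ∑ z : Z, ‖ψ (x, y, z)‖ ^ 2)
    calc ∑ q : Y × Z, ‖ψ (x, q.1 - F x, q.2) - ψ (x, q.1 - G x, q.2)‖ ^ 2
        ≤ ∑ q : Y × Z, (2 * ‖ψ (x, q.1 - F x, q.2)‖ ^ 2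
            + 2 * ‖ψ (x, q.1 - G x, q.2)‖ ^ 2) := by
          apply Finset.sum_le_sum
          intro q _
          have h1 := norm_sub_le (ψ (x, q.1 - F x, q.2)) (ψ (x, q.1 - G x, q.2))
          have h2 := norm_nonneg (ψ (x, q.1 - F x, q.2) - ψ (x, q.1 - G x, q.2))
          nlinarith [norm_nonneg (ψ (x, q.1 - F x, q.2)), norm_nonneg (ψ (x, q.1 - G x, q.2)),
            sq_nonneg (‖ψ (x, q.1 - F x, q.2)‖ - ‖ψ (x, q.1 - G x, q.2)‖)]
      _ = 2 * (∑ q : Y × Z, ‖ψ (x, q.1 - F x, q.2)‖ ^ 2)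
          + 2 * (∑ q : Y × Z, ‖ψ (x, q.1 - G x, q.2)‖ ^ 2) := by
          rw [Finset.sum_add_distrib, Finset.mul_sum, Finset.mul_sum]
      _ ≤ 4 * (∑ y : Y, ∑ z : Z, ‖ψ (x, y, z)‖ ^ 2) := by
          rw [shift (F x), shift (G x)]; linarith
  · have h0 : G x = F x := hFG x (by simpa using hx)
    have hq : ∀ q : Y × Z, ψ (x, q.1 - G x, q.2) = ψ (x, q.1 - F x, q.2) := by
      intro q; rw [h0]
    simp [hq, hx]

end Oracle

section Probability

variable {X : Type*} [Fintype X] [DecidableEq X]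

private lemma total_mass (ε : ℝ) :
    ∑ χ : X → Bool, ∏ x : X, (if χ x then ε else 1 - ε) = 1 := by
  rw [← Fintype.prod_sum (fun (_ : X) (b : Bool) => if b then ε else 1 - ε)]
  simp

private lemma marginal (ε : ℝ) (x₀ : X) :
    ∑ χ : X → Bool, (∏ x : X, (if χ x then ε else 1 - ε)) *
      (if χ x₀ then (1:ℝ) else 0) = ε := by
  have h : ∀ χ : X → Bool,
      (∏ x : X, (if χ x then ε else 1 - ε)) * (if χ x₀ then (1:ℝ) else 0)
      = ∏ x : X, ((if χ x then ε else 1 - ε) *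
          (if x = x₀ then (if χ x then (1:ℝ) else 0) else 1)) := by
    intro χ
    rw [Finset.prod_mul_distrib,
      Finset.prod_ite_eq' Finset.univ x₀ (fun x => if χ x then (1:ℝ) else 0)]
    simp
  simp_rw [h]
  rw [← Fintype.prod_sum (fun (x : X) (b : Bool) =>
    (if b then ε else 1 - ε) * (if x = x₀ then (if b then (1:ℝ) else 0) else 1))]
  have h2 : ∀ x : X, (∑ b : Bool, (if b then ε else 1 - ε) *
      (if x = x₀ then (if b then (1:ℝ) else 0) else 1)) = if x = x₀ then ε else 1 := by
    intro x; by_cases hx : x = x₀ <;> simp [hx]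
  rw [Finset.prod_congr rfl (fun x _ => h2 x),
    Finset.prod_ite_eq' Finset.univ x₀ (fun _ => ε)]
  simp

/-- Abstract expectation bound, via Cauchy–Schwarz. -/
private lemma exp_step (ε : ℝ) (hε0 : 0 ≤ ε) (hε1 : ε ≤ 1)
    (a : (X → Bool) → ℝ) (ha : ∀ χ, 0 ≤ a χ)
    (m : X → ℝ) (hm1 : ∑ x : X, m x = 1)
    (hsq : ∀ χ, a χ ^ 2 ≤ ∑ x : X, (if χ x then 4 * m x else 0)) :
    ∑ χ : X → Bool, (∏ x : X, (if χ x then ε else 1 - ε)) * a χ ≤ 2 * Real.sqrt ε := by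
  set p : (X → Bool) → ℝ := fun χ => ∏ x : X, (if χ x then ε else 1 - ε) with hp
  have hp0 : ∀ χ, 0 ≤ p χ := by
    intro χ
    apply Finset.prod_nonneg
    intro x _
    by_cases h : χ x <;> simp [h] <;> linarith
  have hsq_exp : ∑ χ : X → Bool, p χ * a χ ^ 2 ≤ 4 * ε := by
    calc ∑ χ : X → Bool, p χ * a χ ^ 2
        ≤ ∑ χ : X → Bool, p χ * ∑ x : X, (if χ x then 4 * m x else 0) :=
          Finset.sum_le_sum fun χ _ => mul_le_mul_of_nonneg_left (hsq χ) (hp0 χ)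
      _ = ∑ x : X, (4 * m x) * (∑ χ : X → Bool, p χ * (if χ x then (1:ℝ) else 0)) := by
          simp_rw [Finset.mul_sum]
          rw [Finset.sum_comm]
          congr 1
          funext x
          apply Finset.sum_congr rfl
          intro χ _
          by_cases h : χ x <;> simp [h] <;> ring
      _ = ∑ x : X, (4 * m x) * ε := by
          congr 1; funext x; rw [marginal ε x]
      _ = 4 * ε := by
          rw [← Finset.sum_mul, ← Finset.mul_sum, hm1]; ring
  have hCS := Finset.sum_mul_sq_le_sq_mul_sq Finset.univ
    (fun χ : X → Bool => Real.sqrt (p χ)) (fun χ => Real.sqrt (p χ) * a χ)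
  have e1 : ∀ χ : X → Bool, Real.sqrt (p χ) * (Real.sqrt (p χ) * a χ) = p χ * a χ := by
    intro χ; rw [← mul_assoc, Real.mul_self_sqrt (hp0 χ)]
  have e2 : ∀ χ : X → Bool, Real.sqrt (p χ) ^ 2 = p χ := fun χ => Real.sq_sqrt (hp0 χ)
  have e3 : ∀ χ : X → Bool, (Real.sqrt (p χ) * a χ) ^ 2 = p χ * a χ ^ 2 := by
    intro χ; rw [mul_pow, Real.sq_sqrt (hp0 χ)]
  simp_rw [e1, e2, e3] at hCS
  rw [total_mass, one_mul] at hCS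
  have hs0 : 0 ≤ ∑ χ : X → Bool, p χ * a χ :=
    Finset.sum_nonneg fun χ _ => mul_nonneg (hp0 χ) (ha χ)
  have hfin : (∑ χ : X → Bool, p χ * a χ) ^ 2 ≤ (2 * Real.sqrt ε) ^ 2 := by
    rw [mul_pow, Real.sq_sqrt hε0]
    calc (∑ χ : X → Bool, p χ * a χ) ^ 2 ≤ ∑ χ : X → Bool, p χ * a χ ^ 2 := hCS
      _ ≤ 4 * ε := hsq_exp
      _ = 2 ^ 2 * ε := by ring
  exact le_of_pow_le_pow_left₀ two_ne_zero (by positivity) hfin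

end Probability

set_option maxHeartbeats 1000000 in
theorem blinding_simulation
    {X Y Z : Type*} [Fintype X] [DecidableEq X] [Nonempty X]
    [Fintype Z] [Nonempty Z] [Fintype Y] [AddCommGroup Y]
    (T : ℕ)
    (ψ₀ : EuclideanSpace ℂ (X × Y × Z)) (hψ₀ : ‖ψ₀‖ = 1)
    (C : Fin (T + 1) →
      (EuclideanSpace ℂ (X × Y × Z) →L[ℂ] EuclideanSpace ℂ (X × Y × Z)))
    (hC : ∀ i, C i ∈
      unitary (EuclideanSpace ℂ (X × Y × Z) →L[ℂ] EuclideanSpace ℂ (X × Y × Z)))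
    (ε : ℝ) (hε0 : 0 ≤ ε) (hε1 : ε ≤ 1)
    (P : (X → Bool) → X → Y)
    (hP : ∀ χ x, χ x = false → P χ x = 0)
    (F : X → Y) :
    ∑ χ : X → Bool,
      (∏ x : X, (if χ x then ε else 1 - ε)) *
        Real.sqrt (1 -
          ‖(⟪runQ T C (oracleOp F) ψ₀, runQ T C (oracleOp (F + P χ)) ψ₀⟫_ℂ)‖ ^ 2)
      ≤ 2 * (T : ℝ) * Real.sqrt ε := by
  have hCn : ∀ i x, ‖C i x‖ = ‖x‖ :=
    fun i x => ContinuousLinearMap.norm_map_of_mem_unitary (hC i) x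
  -- intermediate states of the F-run
  let ψt : Fin T → EuclideanSpace ℂ (X × Y × Z) := fun t =>
    runQ t.val (fun i => C (Fin.castLE (by omega) i)) (oracleOp F) ψ₀
  have hψtn : ∀ t, ‖ψt t‖ = 1 := fun t =>
    (runQ_norm t.val (fun i => C (Fin.castLE (by omega) i)) (oracleOp F) ψ₀
      (fun i x => hCn _ x) (oracleOp_norm F)).trans hψ₀
  have hp0 : ∀ χ : X → Bool, 0 ≤ ∏ x : X, (if χ x then ε else 1 - ε) := by
    intro χ
    apply Finset.prod_nonneg
    intro x _
    by_cases h : χ x <;> simp [h] <;> linarith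
  -- norms of the final states
  have hfn : ∀ Q : X → Y, ‖runQ T C (oracleOp Q) ψ₀‖ = 1 := by
    intro Q
    rw [runQ_norm T C (oracleOp Q) ψ₀ hCn (oracleOp_norm Q), hψ₀]
  -- step 1: trace distance ≤ norm of difference ≤ hybrid sum
  have step1 : ∀ χ : X → Bool,
      Real.sqrt (1 -
        ‖(⟪runQ T C (oracleOp F) ψ₀, runQ T C (oracleOp (F + P χ)) ψ₀⟫_ℂ)‖ ^ 2)
      ≤ ∑ t : Fin T, ‖(oracleOp F - oracleOp (F + P χ) :
          EuclideanSpace ℂ (X × Y × Z) →L[ℂ] EuclideanSpace ℂ (X × Y × Z)) (ψt t)‖ := by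
    intro χ
    refine (td_le_norm_sub _ _ (hfn F) (hfn (F + P χ))).trans ?_
    exact runQ_hybrid T C (oracleOp F) (oracleOp (F + P χ)) ψ₀ hCn (oracleOp_norm _)
  calc ∑ χ : X → Bool,
      (∏ x : X, (if χ x then ε else 1 - ε)) *
        Real.sqrt (1 -
          ‖(⟪runQ T C (oracleOp F) ψ₀, runQ T C (oracleOp (F + P χ)) ψ₀⟫_ℂ)‖ ^ 2)
      ≤ ∑ χ : X → Bool, (∏ x : X, (if χ x then ε else 1 - ε)) *
          ∑ t : Fin T, ‖(oracleOp F - oracleOp (F + P χ) :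
            EuclideanSpace ℂ (X × Y × Z) →L[ℂ] EuclideanSpace ℂ (X × Y × Z)) (ψt t)‖ :=
        Finset.sum_le_sum fun χ _ => mul_le_mul_of_nonneg_left (step1 χ) (hp0 χ)
    _ = ∑ t : Fin T, ∑ χ : X → Bool, (∏ x : X, (if χ x then ε else 1 - ε)) *
          ‖(oracleOp F - oracleOp (F + P χ) :
            EuclideanSpace ℂ (X × Y × Z) →L[ℂ] EuclideanSpace ℂ (X × Y × Z)) (ψt t)‖ := by
        simp_rw [Finset.mul_sum]
        rw [Finset.sum_comm]
    _ ≤ ∑ _t : Fin T, 2 * Real.sqrt ε := by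
        apply Finset.sum_le_sum
        intro t _
        apply exp_step ε hε0 hε1 _ (fun χ => norm_nonneg _)
          (fun x => ∑ y : Y, ∑ z : Z, ‖ψt t (x, y, z)‖ ^ 2)
        · have := hψtn t
          have h2 : ‖ψt t‖ ^ 2 = 1 := by rw [this]; norm_num
          rw [euclid_norm_sq] at h2
          rw [← h2, Fintype.sum_prod_type]
          apply Finset.sum_congr rfl
          intro x _
          rw [Fintype.sum_prod_type]
        · intro χ
          apply diff_sq_le
          intro x hx
          have : P χ x = 0 := hP χ x hx
          simp [this]
    _ = 2 * (T : ℝ) * Real.sqrt ε := by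
        rw [Finset.sum_const, Finset.card_univ, Fintype.card_fin, nsmul_eq_mul]
        ring

end
end

section
/- Let k ≥ 1, let ρ be a positive semidefinite d×d complex matrix, and let P₁, …, P_k be orthogonal projection matrices (P_i² = P_i = P_iᴴ) that are pairwise orthogonal (P_i P_j = 0 for i ≠ j) and satisfy Σᵢ Pᵢ = 1. Then k · Σᵢ Pᵢ ρ Pᵢ − ρ is positive semidefinite. Consequently, for every positive semidefinite d×d matrix E, tr(E · Σᵢ Pᵢ ρ Pᵢ) ≥ tr(E ρ)/k. -/
open Matrix
open scoped ComplexOrder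

lemma psd_zero {n : Type*} [Fintype n] : (0 : Matrix n n ℂ).PosSemidef := by
  constructor
  · simp [Matrix.IsHermitian]
  · intro x; simp

lemma psd_sum {n ι : Type*} [Fintype n] (s : Finset ι) (f : ι → Matrix n n ℂ)
    (h : ∀ i ∈ s, (f i).PosSemidef) : (∑ i ∈ s, f i).PosSemidef := by
  classical
  induction s using Finset.induction_on with
  | empty => simpa using psd_zero
  | insert _ _ hi ih =>
    rw [Finset.sum_insert hi]
    exact (h _ (Finset.mem_insert_self _ _)).add
      (ih fun i hmem => h i (Finset.mem_insert_of_mem hmem))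

lemma psd_trace_nonneg {n : Type*} [Fintype n] [DecidableEq n]
    {A : Matrix n n ℂ} (hA : A.PosSemidef) : 0 ≤ A.trace := by
  rw [Matrix.trace]
  apply Finset.sum_nonneg
  intro i _
  have := hA.dotProduct_mulVec_nonneg (Pi.single i 1)
  simpa [dotProduct, Matrix.mulVec_single, Pi.single_apply, Matrix.diag] using this

open scoped MatrixOrder Matrix.Norms.L2Operator in
lemma psd_trace_mul_nonneg {n : Type*} [Fintype n] [DecidableEq n]
    {A B : Matrix n n ℂ} (hA : A.PosSemidef) (hB : B.PosSemidef) :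
    0 ≤ (A * B).trace := by
  obtain ⟨C, rfl⟩ := CStarAlgebra.nonneg_iff_eq_star_mul_self.mp hA.nonneg
  rw [Matrix.mul_assoc, Matrix.trace_mul_comm]
  exact psd_trace_nonneg (hB.mul_mul_conjTranspose_same C)

/-- The pinching inequality: if `P 1, …, P k` are pairwise-orthogonal orthogonal projections
summing to the identity and `ρ` is positive semidefinite, then `k • Σᵢ Pᵢ ρ Pᵢ - ρ` is
positive semidefinite; consequently `tr(E · Σᵢ Pᵢ ρ Pᵢ) ≥ tr(E ρ)/k` for every positive
semidefinite `E`. -/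
theorem pinching_inequality {d k : ℕ} (hk : 1 ≤ k)
    (ρ : Matrix (Fin d) (Fin d) ℂ) (hρ : ρ.PosSemidef)
    (P : Fin k → Matrix (Fin d) (Fin d) ℂ)
    (hproj : ∀ i, (P i)ᴴ = P i ∧ P i * P i = P i)
    (horth : ∀ i j, i ≠ j → P i * P j = 0)
    (hsum : ∑ i, P i = 1) :
    ((k : ℂ) • (∑ i, P i * ρ * P i) - ρ).PosSemidef ∧
      ∀ E : Matrix (Fin d) (Fin d) ℂ, E.PosSemidef →
        (E * ρ).trace.re / (k : ℝ) ≤ (E * ∑ i, P i * ρ * P i).trace.re := by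
  set S := ∑ i, P i * ρ * P i with hS
  set M := (k : ℂ) • S - ρ with hM
  -- expansion of each summand
  have expand : ∀ i j, (P i - P j)ᴴ * ρ * (P i - P j)
      = P i * ρ * P i + P j * ρ * P j - P i * ρ * P j - P j * ρ * P i := by
    intro i j
    rw [conjTranspose_sub, (hproj i).1, (hproj j).1]
    noncomm_ring
  have h1 : ∑ i, ∑ j, P i * ρ * P j = ρ := by
    simp_rw [← Finset.mul_sum, hsum, mul_one, ← Finset.sum_mul, hsum, one_mul]
  have h2 : ∑ i : Fin k, ∑ j, P j * ρ * P i = ρ := by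
    rw [Finset.sum_comm]; exact h1
  have h3 : ∑ i : Fin k, ∑ _j : Fin k, P i * ρ * P i = (k : ℂ) • S := by
    simp_rw [Finset.sum_const, Finset.card_univ, Fintype.card_fin, hS, Finset.smul_sum,
      Nat.cast_smul_eq_nsmul]
  have h4 : ∑ j : Fin k, ∑ i : Fin k, P i * ρ * P i = (k : ℂ) • S := by
    rw [Finset.sum_comm]; exact h3
  have key : (2 : ℂ) • M = ∑ i, ∑ j, (P i - P j)ᴴ * ρ * (P i - P j) := by
    simp_rw [expand, Finset.sum_sub_distrib, Finset.sum_add_distrib, h1, h2]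
    rw [h3]
    have : ∑ i : Fin k, ∑ _j : Fin k, P _j * ρ * P _j = (k : ℂ) • S := h4
    rw [this, hM]
    module
  have hN : ((2 : ℂ) • M).PosSemidef := by
    rw [key]
    apply psd_sum
    intro i _
    apply psd_sum
    intro j _
    exact hρ.conjTranspose_mul_mul_same (P i - P j)
  have hMpsd : M.PosSemidef := by
    refine posSemidef_iff_dotProduct_mulVec.mpr ⟨?_, ?_⟩
    · have h1 : ((2 : ℂ) • M)ᴴ = (2 : ℂ) • M := hN.1
      rw [Matrix.conjTranspose_smul] at h1
      have h1' : (2 : ℂ) • Mᴴ = (2 : ℂ) • M := by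
        simpa using h1
      have h2ne : (2 : ℂ) ≠ 0 := two_ne_zero
      exact smul_right_injective _ h2ne h1'
    · intro x
      have := hN.dotProduct_mulVec_nonneg x
      rw [Matrix.smul_mulVec, dotProduct_smul] at this
      rw [Complex.le_def] at this ⊢
      constructor
      · have hre := this.1
        simp only [Complex.zero_re, Complex.mul_re, Complex.re_ofNat, Complex.im_ofNat,
          smul_eq_mul] at hre ⊢
        linarith
      · have him := this.2
        simp only [Complex.zero_im, Complex.mul_im, Complex.re_ofNat, Complex.im_ofNat,
          smul_eq_mul] at him ⊢
        linarith
  refine ⟨hMpsd, ?_⟩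
  intro E hE
  have htr : 0 ≤ (E * M).trace := psd_trace_mul_nonneg hE hMpsd
  have hexp : (E * M).trace = (k : ℂ) * (E * S).trace - (E * ρ).trace := by
    rw [hM, Matrix.mul_sub, Matrix.mul_smul, Matrix.trace_sub, Matrix.trace_smul,
      smul_eq_mul]
  rw [hexp, Complex.le_def] at htr
  have hre := htr.1
  simp only [Complex.zero_re, Complex.sub_re, Complex.mul_re, Complex.natCast_re,
    Complex.natCast_im] at hre
  have hkpos : (0 : ℝ) < (k : ℝ) := by exact_mod_cast hk
  rw [div_le_iff₀ hkpos]
  nlinarith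
end

section
/- Let U be a unitary operator and P an orthogonal projection on a finite-dimensional complex inner product space (equivalently, U a unitary d×d complex matrix and P a d×d matrix with P² = P = Pᴴ). Then the operator norm of the commutator satisfies ‖U·P − P·U‖ ≤ 1. -/
/-- For a unitary `U` and an orthogonal projection `P` on a finite-dimensional complex
inner product space, the operator norm of the commutator satisfies `‖U·P - P·U‖ ≤ 1`. -/
theorem commutator_unitary_projection_norm_le_one
    {E : Type*} [NormedAddCommGroup E] [InnerProductSpace ℂ E] [FiniteDimensional ℂ E]
    (U P : E →L[ℂ] E)
    (hU : U ∈ unitary (E →L[ℂ] E))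
    (hP_idem : P * P = P) (hP_sa : IsSelfAdjoint P) :
    ‖U * P - P * U‖ ≤ 1 := by
  have hPadj : ContinuousLinearMap.adjoint P = P := by
    rw [← ContinuousLinearMap.star_eq_adjoint]; exact hP_sa
  -- orthogonality of P y and z - P z
  have horth : ∀ y z : E, inner ℂ (P y) (z - P z) = (0 : ℂ) := by
    intro y z
    have hrw := ContinuousLinearMap.adjoint_inner_left P (z - P z) y
    rw [hPadj] at hrw
    have hz : P (z - P z) = 0 := by
      have := congrArg (fun T : E →L[ℂ] E => T z) hP_idem
      simp only [ContinuousLinearMap.mul_apply] at this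
      simp [map_sub, this]
    rw [hrw, hz, inner_zero_right]
  -- Pythagoras decomposition of any vector
  have hpyth : ∀ w : E, ‖P w‖ ^ 2 + ‖w - P w‖ ^ 2 = ‖w‖ ^ 2 := by
    intro w
    have := norm_add_sq_eq_norm_sq_add_norm_sq_of_inner_eq_zero (P w) (w - P w) (horth w w)
    simpa [add_sub_cancel, sq] using this.symm
  -- U is an isometry on vectors
  have hUnorm : ∀ x : E, ‖U x‖ = ‖x‖ := by
    intro x
    have h1 : star U * U = 1 := hU.1
    have : inner ℂ (U x) (U x) = (inner ℂ x x : ℂ) := by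
      rw [← ContinuousLinearMap.adjoint_inner_right, ← ContinuousLinearMap.star_eq_adjoint]
      have := congrArg (fun T : E →L[ℂ] E => T x) h1
      simp only [ContinuousLinearMap.mul_apply, ContinuousLinearMap.one_apply] at this
      rw [this]
    rw [inner_self_eq_norm_sq_to_K, inner_self_eq_norm_sq_to_K] at this
    have h2 : ‖U x‖ ^ 2 = ‖x‖ ^ 2 := by exact_mod_cast this
    nlinarith [norm_nonneg (U x), norm_nonneg x]
  refine ContinuousLinearMap.opNorm_le_bound _ zero_le_one fun x => ?_
  rw [one_mul]
  set u := P x with hu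
  set v := x - P x with hv
  -- rewrite (U*P - P*U) x
  have hkey : (U * P - P * U) x = (U u - P (U u)) - P (U v) := by
    simp only [ContinuousLinearMap.sub_apply, ContinuousLinearMap.mul_apply, hu, hv,
      map_sub]
    abel
  have horth2 : inner ℂ (U u - P (U u)) (-(P (U v))) = (0 : ℂ) := by
    rw [inner_neg_right, ← inner_conj_symm, horth, map_zero, neg_zero]
  have hsq : ‖(U * P - P * U) x‖ ^ 2 ≤ ‖x‖ ^ 2 := by
    rw [hkey, sub_eq_add_neg, sq,
      norm_add_sq_eq_norm_sq_add_norm_sq_of_inner_eq_zero _ _ horth2, norm_neg,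
      ← sq, ← sq]
    have h1 : ‖U u - P (U u)‖ ^ 2 ≤ ‖u‖ ^ 2 := by
      calc ‖U u - P (U u)‖ ^ 2 ≤ ‖P (U u)‖ ^ 2 + ‖U u - P (U u)‖ ^ 2 := le_add_of_nonneg_left (by positivity)
        _ = ‖U u‖ ^ 2 := hpyth (U u)
        _ = ‖u‖ ^ 2 := by rw [hUnorm]
    have h2 : ‖P (U v)‖ ^ 2 ≤ ‖v‖ ^ 2 := by
      calc ‖P (U v)‖ ^ 2 ≤ ‖P (U v)‖ ^ 2 + ‖U v - P (U v)‖ ^ 2 := le_add_of_nonneg_right (by positivity)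
        _ = ‖U v‖ ^ 2 := hpyth (U v)
        _ = ‖v‖ ^ 2 := by rw [hUnorm]
    calc ‖U u - P (U u)‖ ^ 2 + ‖P (U v)‖ ^ 2 ≤ ‖u‖ ^ 2 + ‖v‖ ^ 2 := add_le_add h1 h2
      _ = ‖x‖ ^ 2 := hpyth x
  nlinarith [norm_nonneg ((U * P - P * U) x), norm_nonneg x]
end

section
/- Let n ≥ 1, let ε > 0, and let k be a natural number with k ≥ (2 + ε)·n. Let S₁, …, S_k be subsets of {0,1}ⁿ, each of size 2^{n−1}, chosen independently and uniformly at random among all subsets of {0,1}ⁿ of size 2^{n−1}. For a subset S ⊆ {0,1}ⁿ, let Ξ_S be the pinching channel on 2ⁿ×2ⁿ complex matrices given by Ξ_S(ρ) = Π_S ρ Π_S + (1 − Π_S) ρ (1 − Π_S), where Π_S = Σ_{x ∈ S} |x⟩⟨x|, and let Ξ be the full dephasing channel Ξ(ρ) = Σ_{x ∈ {0,1}ⁿ} |x⟩⟨x| ρ |x⟩⟨x| (the diagonal part of ρ). Then the probability that the composed channel Ξ_{S_k} ∘ Ξ_{S_{k−1}} ∘ ⋯ ∘ Ξ_{S₁}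 equals Ξ (as a map on all 2ⁿ×2ⁿ complex matrices) is at least 1 − 2^{−εn}. -/
noncomputable section

open scoped Classical

/-- `Π_S = Σ_{x ∈ S} |x⟩⟨x|`: the diagonal orthogonal projection associated with `S`. -/
def projMat {X : Type*} [Fintype X] [DecidableEq X] (S : Finset X) : Matrix X X ℂ :=
  Matrix.diagonal fun x => if x ∈ S then 1 else 0

/-- The pinching channel `Ξ_S(ρ) = Π_S ρ Π_S + (1 - Π_S) ρ (1 - Π_S)`. -/
def pinch {X : Type*} [Fintype X] [DecidableEq X] (S : Finset X) (ρ : Matrix X X ℂ) :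
    Matrix X X ℂ :=
  projMat S * ρ * projMat S + (1 - projMat S) * ρ * (1 - projMat S)

/-- `pinchSeq k S ρ = (Ξ_{S k} ∘ Ξ_{S (k-1)} ∘ ⋯ ∘ Ξ_{S 1})(ρ)`. -/
def pinchSeq {X : Type*} [Fintype X] [DecidableEq X] :
    (k : ℕ) → (Fin k → Finset X) → Matrix X X ℂ → Matrix X X ℂ
  | 0, _, ρ => ρ
  | k + 1, S, ρ => pinch (S (Fin.last k)) (pinchSeq k (fun i => S i.castSucc) ρ)

variable {X : Type*} [Fintype X] [DecidableEq X]

lemma pinch_apply (S : Finset X) (ρ : Matrix X X ℂ) (x y : X) :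
    pinch S ρ x y = if (x ∈ S ↔ y ∈ S) then ρ x y else 0 := by
  have h1 : (1 : Matrix X X ℂ) - projMat S =
      Matrix.diagonal fun x => if x ∈ S then 0 else 1 := by
    ext i j
    by_cases hij : i = j
    · subst hij; by_cases hi : i ∈ S <;>
        simp [projMat, Matrix.sub_apply, Matrix.one_apply, hi]
    · by_cases hi : i ∈ S <;>
        simp [projMat, Matrix.sub_apply, Matrix.one_apply, Matrix.diagonal_apply_ne _ hij, hij]
  rw [pinch, h1]
  simp only [projMat, Matrix.add_apply, Matrix.mul_diagonal, Matrix.diagonal_mul]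
  by_cases hx : x ∈ S <;> by_cases hy : y ∈ S <;> simp [hx, hy]

lemma pinchSeq_apply (k : ℕ) (S : Fin k → Finset X) (ρ : Matrix X X ℂ) (x y : X) :
    pinchSeq k S ρ x y = if (∀ i, (x ∈ S i ↔ y ∈ S i)) then ρ x y else 0 := by
  induction k generalizing ρ with
  | zero => simp [pinchSeq]
  | succ k ih =>
    rw [pinchSeq, pinch_apply, ih]
    by_cases hall : ∀ i : Fin (k+1), (x ∈ S i ↔ y ∈ S i)
    · simp [hall, fun i : Fin k => hall i.castSucc, hall (Fin.last k)]
    · rw [if_neg hall]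
      by_cases hlast : (x ∈ S (Fin.last k) ↔ y ∈ S (Fin.last k))
      · have : ¬ ∀ i : Fin k, (x ∈ S i.castSucc ↔ y ∈ S i.castSucc) := by
          intro h; exact hall fun i => Fin.lastCases hlast h i
        simp [this]
      · simp [hlast]

lemma pinchSeq_eq_diag_iff (k : ℕ) (S : Fin k → Finset X) :
    (∀ ρ : Matrix X X ℂ, pinchSeq k S ρ = Matrix.diagonal fun x => ρ x x) ↔
    (∀ x y : X, x ≠ y → ∃ i, ¬ (x ∈ S i ↔ y ∈ S i)) := by
  constructor
  · intro h x y hxy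
    by_contra hc
    push_neg at hc
    have hall : ∀ i, (x ∈ S i ↔ y ∈ S i) := hc
    have := congrFun (congrFun (h (Matrix.single x y 1)) x) y
    rw [pinchSeq_apply, if_pos hall, Matrix.diagonal_apply_ne _ hxy] at this
    simp [Matrix.single] at this
  · intro h ρ
    ext x y
    by_cases hxy : x = y
    · subst hxy
      rw [pinchSeq_apply, if_pos (fun i => Iff.rfl), Matrix.diagonal_apply_eq]
    · obtain ⟨i, hi⟩ := h x y hxy
      rw [pinchSeq_apply, if_neg (fun hall => hi (hall i)), Matrix.diagonal_apply_ne _ hxy]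

open Finset





lemma count_both (x y : X) (hxy : x ≠ y) (u : ℕ) :
    (univ.filter fun A : Finset X => A.card = u + 2 ∧ x ∈ A ∧ y ∈ A).card
      = ((univ.erase x).erase y : Finset X).card.choose u := by
  rw [← Finset.card_powersetCard]
  refine Finset.card_nbij' (fun A => (A.erase x).erase y)
    (fun B => insert x (insert y B)) ?_ ?_ ?_ ?_
  · intro A hA
    simp only [Finset.mem_coe, mem_filter, mem_univ, true_and] at hA
    obtain ⟨hc, hx, hy⟩ := hA
    rw [Finset.mem_coe, Finset.mem_powersetCard]
    constructor
    · exact Finset.erase_subset_erase _ (Finset.erase_subset_erase _ (Finset.subset_univ A))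
    · rw [Finset.card_erase_of_mem (Finset.mem_erase.mpr ⟨hxy.symm, hy⟩),
        Finset.card_erase_of_mem hx, hc]
      omega
  · intro B hB
    rw [Finset.mem_coe, Finset.mem_powersetCard] at hB
    obtain ⟨hsub, hc⟩ := hB
    have hyB : y ∉ B := fun h => (Finset.mem_erase.mp (hsub h)).1 rfl
    have hxB : x ∉ insert y B := by
      simp only [Finset.mem_insert]
      rintro (h | h)
      · exact hxy h
      · exact (Finset.mem_erase.mp (Finset.mem_of_mem_erase (hsub h))).1 rfl
    simp only [Finset.mem_coe, mem_filter, mem_univ, true_and]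
    refine ⟨?_, Finset.mem_insert_self _ _, Finset.mem_insert_of_mem (Finset.mem_insert_self _ _)⟩
    rw [Finset.card_insert_of_notMem hxB, Finset.card_insert_of_notMem hyB, hc]
  · intro A hA
    simp only [Finset.mem_coe, mem_filter, mem_univ, true_and] at hA
    obtain ⟨hc, hx, hy⟩ := hA
    simp only []
    rw [Finset.insert_erase (Finset.mem_erase.mpr ⟨hxy.symm, hy⟩),
      Finset.insert_erase hx]
  · intro B hB
    rw [Finset.mem_coe, Finset.mem_powersetCard] at hB
    obtain ⟨hsub, hc⟩ := hB
    have hyB : y ∉ B := fun h => (Finset.mem_erase.mp (hsub h)).1 rfl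
    have hxB : x ∉ insert y B := by
      simp only [Finset.mem_insert]
      rintro (h | h)
      · exact hxy h
      · exact (Finset.mem_erase.mp (Finset.mem_of_mem_erase (hsub h))).1 rfl
    simp only []
    rw [Finset.erase_insert hxB, Finset.erase_insert hyB]

lemma count_neither (x y : X) (m : ℕ) :
    (univ.filter fun A : Finset X => A.card = m ∧ x ∉ A ∧ y ∉ A).card
      = ((univ.erase x).erase y : Finset X).card.choose m := by
  rw [← Finset.card_powersetCard]
  refine Finset.card_nbij' id id ?_ ?_ (fun _ _ => rfl) (fun _ _ => rfl)
  · intro A hA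
    simp only [Finset.mem_coe, mem_filter, mem_univ, true_and] at hA
    rw [Finset.mem_coe, Finset.mem_powersetCard]
    exact ⟨fun a ha => Finset.mem_erase.mpr ⟨fun h => hA.2.2 (h ▸ ha),
      Finset.mem_erase.mpr ⟨fun h => hA.2.1 (h ▸ ha), mem_univ a⟩⟩, hA.1⟩
  · intro B hB
    rw [Finset.mem_coe, Finset.mem_powersetCard] at hB
    have hx : x ∉ B := fun h => (Finset.mem_erase.mp (Finset.mem_of_mem_erase (hB.1 h))).1 rfl
    have hy : y ∉ B := fun h => (Finset.mem_erase.mp (hB.1 h)).1 rfl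
    simp only [Finset.mem_coe, mem_filter, mem_univ, true_and, id]
    exact ⟨hB.2, hx, hy⟩

lemma key_count (m : ℕ) (hm : 1 ≤ m) (hX : Fintype.card X = 2 * m) (x y : X) (hxy : x ≠ y) :
    2 * (univ.filter fun A : Finset X => A.card = m ∧ (x ∈ A ↔ y ∈ A)).card
      ≤ (2 * m).choose m := by
  have hT : ((univ.erase x).erase y : Finset X).card = 2 * m - 2 := by
    rw [Finset.card_erase_of_mem (Finset.mem_erase.mpr ⟨hxy.symm, mem_univ y⟩),
      Finset.card_erase_of_mem (mem_univ x), Finset.card_univ, hX]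
    omega
  have hsplit : (univ.filter fun A : Finset X => A.card = m ∧ (x ∈ A ↔ y ∈ A))
      = (univ.filter fun A : Finset X => A.card = m ∧ x ∈ A ∧ y ∈ A)
        ∪ (univ.filter fun A : Finset X => A.card = m ∧ x ∉ A ∧ y ∉ A) := by
    ext A
    simp only [mem_filter, mem_union, mem_univ, true_and]
    by_cases h : x ∈ A <;> by_cases h' : y ∈ A <;> simp [h, h'] <;> tauto
  have hdisj : Disjoint
      (univ.filter fun A : Finset X => A.card = m ∧ x ∈ A ∧ y ∈ A)
      (univ.filter fun A : Finset X => A.card = m ∧ x ∉ A ∧ y ∉ A) := by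
    rw [Finset.disjoint_left]
    intro A h1 h2
    simp only [mem_filter] at h1 h2
    exact h2.2.2.1 h1.2.2.1
  rw [hsplit, Finset.card_union_of_disjoint hdisj]
  match m, hm with
  | 1, _ =>
    have hb : (univ.filter fun A : Finset X => A.card = 1 ∧ x ∈ A ∧ y ∈ A) = ∅ := by
      rw [Finset.filter_eq_empty_iff]
      rintro A - ⟨hc, hx, hy⟩
      have : ({x, y} : Finset X) ⊆ A := by
        intro a ha; simp only [Finset.mem_insert, Finset.mem_singleton] at ha
        rcases ha with rfl | rfl <;> assumption
      have h2 : ({x, y} : Finset X).card = 2 := Finset.card_pair hxy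
      have := Finset.card_le_card this
      omega
    have hn : (univ.filter fun A : Finset X => A.card = 1 ∧ x ∉ A ∧ y ∉ A) = ∅ := by
      rw [Finset.filter_eq_empty_iff]
      rintro A - ⟨hc, hx, hy⟩
      have hsub : A ⊆ (univ.erase x).erase y := fun a ha =>
        Finset.mem_erase.mpr ⟨fun h => hy (h ▸ ha),
          Finset.mem_erase.mpr ⟨fun h => hx (h ▸ ha), mem_univ a⟩⟩
      have := Finset.card_le_card hsub
      omega
    simp [hb, hn]
  | u + 2, _ =>
    have hT2 : ((univ.erase x).erase y : Finset X).card = 2 * u + 2 := by omega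
    have hboth := count_both x y hxy u
    have hneither := count_neither x y (u + 2)
    rw [hT2] at hboth hneither
    rw [hboth, hneither]
    have e1 : (2 * (u + 2)).choose (u + 2)
        = (2 * u + 3).choose (u + 1) + (2 * u + 3).choose (u + 2) := by
      have h : 2 * (u + 2) = (2 * u + 3) + 1 := by ring
      rw [h, Nat.choose_succ_succ]
    have e2 : (2 * u + 3).choose (u + 1)
        = (2 * u + 2).choose u + (2 * u + 2).choose (u + 1) := Nat.choose_succ_succ _ _
    have e3 : (2 * u + 3).choose (u + 2)
        = (2 * u + 2).choose (u + 1) + (2 * u + 2).choose (u + 2) := Nat.choose_succ_succ _ _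
    have hmid : (2 * u + 2) / 2 = u + 1 := by omega
    have i1 : (2 * u + 2).choose u ≤ (2 * u + 2).choose (u + 1) := by
      have := Nat.choose_le_middle u (2 * u + 2); rwa [hmid] at this
    have i2 : (2 * u + 2).choose (u + 2) ≤ (2 * u + 2).choose (u + 1) := by
      have := Nat.choose_le_middle (u + 2) (2 * u + 2); rwa [hmid] at this
    omega

lemma sub_filter_card (m : ℕ) (q : Finset X → Prop) [DecidablePred q]
    [inst : DecidablePred fun A : {A : Finset X // A.card = m} => q A.1] :
    (univ.filter fun A : {A : Finset X // A.card = m} => q A.1).card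
      = (univ.filter fun A : Finset X => A.card = m ∧ q A).card := by
  refine Finset.card_nbij (fun A => A.1) ?_ ?_ ?_
  · intro A hA
    simp only [Finset.mem_coe, mem_filter, mem_univ, true_and] at *
    exact ⟨A.2, hA⟩
  · intro A _ B _ h
    exact Subtype.ext h
  · intro A hA
    simp only [Finset.coe_filter, mem_univ, true_and, Set.mem_setOf_eq] at hA
    exact ⟨⟨A, hA.1⟩, by simp [hA.2], rfl⟩

set_option maxHeartbeats 1000000 in
/-- If `k ≥ (2 + ε)·n` subsets of `{0,1}ⁿ` of size `2^{n-1}` are chosen independently and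
uniformly at random, then with probability at least `1 - 2^{-εn}` the composition of the
associated pinching channels equals the full dephasing (computational-basis measurement)
channel. -/
theorem random_pinchings_give_full_measurement
    (n : ℕ) (hn : 1 ≤ n) (ε : ℝ) (hε : 0 < ε)
    (k : ℕ) (hk : (2 + ε) * (n : ℝ) ≤ (k : ℝ)) :
    1 - (2 : ℝ) ^ (-(ε * (n : ℝ))) ≤
      ((Finset.univ.filter
          (fun S : Fin k → {A : Finset (Fin n → ZMod 2) // A.card = 2 ^ (n - 1)} =>
            ∀ ρ : Matrix (Fin n → ZMod 2) (Fin n → ZMod 2) ℂ,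
              pinchSeq k (fun i => (S i).1) ρ = Matrix.diagonal fun x => ρ x x)).card : ℝ) /
        (Fintype.card (Fin k → {A : Finset (Fin n → ZMod 2) // A.card = 2 ^ (n - 1)}) : ℝ) := by
  have hm1 : 1 ≤ 2 ^ (n - 1) := Nat.one_le_two_pow
  have h1 : Fintype.card (Fin n → ZMod 2) = 2 ^ n := by
    simp [Fintype.card_fun]
  have hX : Fintype.card (Fin n → ZMod 2) = 2 * 2 ^ (n - 1) := by
    rw [h1]
    obtain ⟨n', rfl⟩ : ∃ n', n = n' + 1 := ⟨n - 1, by omega⟩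
    simp [pow_succ]
    ring
  set M : ℕ := (2 * 2 ^ (n - 1)).choose (2 ^ (n - 1)) with hMdef
  have hMpos : 0 < M := Nat.choose_pos (by omega)
  have hMcard : Fintype.card {A : Finset (Fin n → ZMod 2) // A.card = 2 ^ (n - 1)} = M := by
    rw [Fintype.card_finset_len, hX]
  have hcardfun :
      Fintype.card (Fin k → {A : Finset (Fin n → ZMod 2) // A.card = 2 ^ (n - 1)}) = M ^ k := by
    rw [Fintype.card_fun, hMcard, Fintype.card_fin]
  have hGood : (Finset.univ.filter
      (fun S : Fin k → {A : Finset (Fin n → ZMod 2) // A.card = 2 ^ (n - 1)} =>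
        ∀ ρ : Matrix (Fin n → ZMod 2) (Fin n → ZMod 2) ℂ,
          pinchSeq k (fun i => (S i).1) ρ = Matrix.diagonal fun x => ρ x x))
      = Finset.univ.filter
        (fun S : Fin k → {A : Finset (Fin n → ZMod 2) // A.card = 2 ^ (n - 1)} =>
          ∀ x y : Fin n → ZMod 2, x ≠ y → ∃ i, ¬ (x ∈ (S i).1 ↔ y ∈ (S i).1)) := by
    apply Finset.filter_congr
    intro S _
    exact pinchSeq_eq_diag_iff k (fun i => (S i).1)
  rw [hGood, hcardfun]
  set cond : (Fin k → {A : Finset (Fin n → ZMod 2) // A.card = 2 ^ (n - 1)}) → Prop :=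
    fun S => ∀ x y : Fin n → ZMod 2, x ≠ y → ∃ i, ¬ (x ∈ (S i).1 ↔ y ∈ (S i).1) with hconddef
  set G : ℕ := (Finset.univ.filter cond).card with hGdef
  set B : ℕ := (Finset.univ.filter (fun S => ¬ cond S)).card with hBdef
  have hGB : G + B = M ^ k := by
    rw [hGdef, hBdef, Finset.card_filter_add_card_filter_not, Finset.card_univ,
      hcardfun]
  set F : (Fin n → ZMod 2) × (Fin n → ZMod 2)
      → Finset (Fin k → {A : Finset (Fin n → ZMod 2) // A.card = 2 ^ (n - 1)}) := fun p =>
    Fintype.piFinset fun _ : Fin k =>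
      Finset.univ.filter
        fun A : {A : Finset (Fin n → ZMod 2) // A.card = 2 ^ (n - 1)} => p.1 ∈ A.1 ↔ p.2 ∈ A.1
    with hFdef
  have hsub : Finset.univ.filter (fun S => ¬ cond S)
      ⊆ (Finset.univ.filter
          fun p : (Fin n → ZMod 2) × (Fin n → ZMod 2) => p.1 ≠ p.2).biUnion F := by
    intro S hS
    simp only [Finset.mem_filter, Finset.mem_univ, true_and, hconddef] at hS
    push_neg at hS
    obtain ⟨x, y, hxy, hall⟩ := hS
    refine Finset.mem_biUnion.mpr ⟨(x, y), by simpa using hxy, ?_⟩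
    rw [hFdef, Fintype.mem_piFinset]
    intro i
    simp only [Finset.mem_filter, Finset.mem_univ, true_and]
    exact hall i
  have hBle : B ≤ ∑ p ∈ (Finset.univ.filter
      fun p : (Fin n → ZMod 2) × (Fin n → ZMod 2) => p.1 ≠ p.2), (F p).card :=
    le_trans (Finset.card_le_card hsub) (Finset.card_biUnion_le)
  have hFcard : ∀ p : (Fin n → ZMod 2) × (Fin n → ZMod 2), p.1 ≠ p.2 →
      2 * ((Finset.univ.filter
        fun A : {A : Finset (Fin n → ZMod 2) // A.card = 2 ^ (n - 1)} =>
          p.1 ∈ A.1 ↔ p.2 ∈ A.1).card) ≤ M := by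
    intro p hp
    rw [sub_filter_card (2 ^ (n - 1)) (fun A => p.1 ∈ A ↔ p.2 ∈ A)]
    exact key_count (2 ^ (n - 1)) hm1 hX p.1 p.2 hp
  have hFpow : ∀ p : (Fin n → ZMod 2) × (Fin n → ZMod 2), (F p).card
      = ((Finset.univ.filter
          fun A : {A : Finset (Fin n → ZMod 2) // A.card = 2 ^ (n - 1)} =>
            p.1 ∈ A.1 ↔ p.2 ∈ A.1).card) ^ k := by
    intro p
    rw [hFdef, Fintype.card_piFinset]
    simp
  have hMk : (0:ℝ) < (M:ℝ) ^ k := by positivity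
  have pairs_card : ((Finset.univ.filter
      fun p : (Fin n → ZMod 2) × (Fin n → ZMod 2) => p.1 ≠ p.2).card : ℝ)
      ≤ ((2:ℝ) ^ n) ^ 2 := by
    have h2 : (Finset.univ.filter
        fun p : (Fin n → ZMod 2) × (Fin n → ZMod 2) => p.1 ≠ p.2).card
        ≤ Fintype.card ((Fin n → ZMod 2) × (Fin n → ZMod 2)) :=
      le_trans (Finset.card_le_card (Finset.filter_subset _ _)) (le_of_eq (Finset.card_univ))
    have h3 : Fintype.card ((Fin n → ZMod 2) × (Fin n → ZMod 2)) = 2 ^ n * 2 ^ n := by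
      rw [Fintype.card_prod, h1]
    rw [h3] at h2
    calc ((Finset.univ.filter
        fun p : (Fin n → ZMod 2) × (Fin n → ZMod 2) => p.1 ≠ p.2).card : ℝ)
        ≤ ((2 ^ n * 2 ^ n : ℕ) : ℝ) := by exact_mod_cast h2
      _ = ((2:ℝ) ^ n) ^ 2 := by push_cast; ring
  have hBreal : (B:ℝ) ≤ ((2:ℝ) ^ n) ^ 2 * ((M:ℝ)/2) ^ k := by
    calc (B:ℝ) ≤ ((∑ p ∈ (Finset.univ.filter
          fun p : (Fin n → ZMod 2) × (Fin n → ZMod 2) => p.1 ≠ p.2), (F p).card : ℕ) : ℝ) := by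
          exact_mod_cast hBle
      _ = ∑ p ∈ (Finset.univ.filter
          fun p : (Fin n → ZMod 2) × (Fin n → ZMod 2) => p.1 ≠ p.2), ((F p).card : ℝ) := by
          exact Nat.cast_sum _ _
      _ ≤ ∑ p ∈ (Finset.univ.filter
          fun p : (Fin n → ZMod 2) × (Fin n → ZMod 2) => p.1 ≠ p.2), ((M:ℝ)/2) ^ k := by
          apply Finset.sum_le_sum
          intro p hp
          have hp' : p.1 ≠ p.2 := by simpa using (Finset.mem_filter.mp hp).2
          rw [hFpow p]
          push_cast
          apply pow_le_pow_left₀ (Nat.cast_nonneg _)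
          have h5 := hFcard p hp'
          have h6 : 2 * (((Finset.univ.filter
              fun A : {A : Finset (Fin n → ZMod 2) // A.card = 2 ^ (n - 1)} =>
                p.1 ∈ A.1 ↔ p.2 ∈ A.1).card : ℝ)) ≤ (M:ℝ) := by exact_mod_cast h5
          linarith
      _ = ((Finset.univ.filter
          fun p : (Fin n → ZMod 2) × (Fin n → ZMod 2) => p.1 ≠ p.2).card : ℝ)
            * ((M:ℝ)/2) ^ k := by
          rw [Finset.sum_const, nsmul_eq_mul]
      _ ≤ ((2:ℝ) ^ n) ^ 2 * ((M:ℝ)/2) ^ k :=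
          mul_le_mul_of_nonneg_right pairs_card (by positivity)
  have hexp : (2:ℝ) ^ (n * 2) / (2:ℝ) ^ k ≤ (2:ℝ) ^ (-(ε * (n:ℝ))) := by
    rw [← Real.rpow_natCast 2 (n * 2), ← Real.rpow_natCast 2 k,
      ← Real.rpow_sub (by norm_num : (0:ℝ) < 2)]
    apply Real.rpow_le_rpow_of_exponent_le (by norm_num)
    push_cast
    nlinarith [hk]
  have hfinal : (B:ℝ) ≤ (2:ℝ) ^ (-(ε * (n:ℝ))) * (M:ℝ) ^ k := by
    calc (B:ℝ) ≤ ((2:ℝ) ^ n) ^ 2 * ((M:ℝ)/2) ^ k := hBreal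
      _ = ((2:ℝ) ^ (n * 2) / (2:ℝ) ^ k) * (M:ℝ) ^ k := by
          rw [div_pow]; ring
      _ ≤ (2:ℝ) ^ (-(ε * (n:ℝ))) * (M:ℝ) ^ k :=
          mul_le_mul_of_nonneg_right hexp (by positivity)
  have hGreal : ((M:ℝ) ^ k) - (B:ℝ) ≤ (G:ℝ) := by
    have h7 : (G:ℝ) + (B:ℝ) = (M:ℝ) ^ k := by exact_mod_cast hGB
    linarith
  have hMkcast : ((M ^ k : ℕ) : ℝ) = (M:ℝ) ^ k := by push_cast; rfl
  rw [hMkcast, le_div_iff₀ hMk]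
  have hT : (0:ℝ) ≤ (2:ℝ) ^ (-(ε * (n:ℝ))) := by positivity
  nlinarith [hfinal, hGreal, hMk, hT]

end
end
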